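/- For all n, m ≥ 2, there is no order embedding φ : (Ωⁿ, ⊑) → (Δᵐ, ⊑) (ρ ⊑ τ iff φ(ρ) ⊑ φ(τ)) such that μ(φ(ρ)) = σ(ρ) for all ρ ∈ Ωⁿ, where μ is Shannon entropy and σ is von Neumann entropy. -/

import Mathlib

open scoped ComplexOrder Matrix

/-- Δⁿ : classical n-states. -/
def IsClassicalState (n : ℕ) (x : Fin n → ℝ) : Prop :=
  (∀ i, 0 ≤ x i) ∧ ∑ i, x i = 1

def ClState (n : ℕ) := {x : Fin n → ℝ // IsClassicalState n x}

/-- The Bayesian order (symmetric characterization). -/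
def bayesLE {n : ℕ} (x y : Fin n → ℝ) : Prop :=
  ∃ σ : Equiv.Perm (Fin n),
    Antitone (fun i => x (σ i)) ∧ Antitone (fun i => y (σ i)) ∧
    ∀ i j : Fin n, (i : ℕ) + 1 = (j : ℕ) →
      x (σ i) * y (σ j) ≤ x (σ j) * y (σ i)

def clLE {n : ℕ} (x y : ClState n) : Prop := bayesLE x.val y.val

/-- Ωⁿ : density matrices on ℂⁿ. -/
def IsDensityMatrix (n : ℕ) (ρ : Matrix (Fin n) (Fin n) ℂ) : Prop :=
  ρ.PosSemidef ∧ ρ.trace = 1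

def QState (n : ℕ) := {ρ : Matrix (Fin n) (Fin n) ℂ // IsDensityMatrix n ρ}

/-- The spectral order on density matrices. -/
def specLE {n : ℕ} (ρ σ : Matrix (Fin n) (Fin n) ℂ) : Prop :=
  ∃ U : Matrix (Fin n) (Fin n) ℂ, U ∈ Matrix.unitaryGroup (Fin n) ℂ ∧
    (Uᴴ * ρ * U).IsDiag ∧ (Uᴴ * σ * U).IsDiag ∧
    bayesLE (fun i => ((Uᴴ * ρ * U) i i).re) (fun i => ((Uᴴ * σ * U) i i).re)

def qLE {n : ℕ} (ρ σ : QState n) : Prop := specLE ρ.val σ.val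

/-- Shannon entropy (with the convention 0 · ln 0 = 0, as `Real.log 0 = 0`). -/
noncomputable def shannonEntropy {n : ℕ} (x : ClState n) : ℝ :=
  -∑ i, x.val i * Real.log (x.val i)

/-- von Neumann entropy: −∑ λᵢ ln λᵢ, λᵢ the eigenvalues of ρ. -/
noncomputable def vnEntropy {n : ℕ} (ρ : QState n) : ℝ :=
  -∑ i, ρ.prop.1.1.eigenvalues i * Real.log (ρ.prop.1.1.eigenvalues i)


def pureMat {n : ℕ} (v : Fin n → ℂ) : Matrix (Fin n) (Fin n) ℂ :=
  Matrix.of fun i j => v i * star (v j)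

lemma pureMat_herm {n : ℕ} (v : Fin n → ℂ) : (pureMat v).IsHermitian := by
  ext i j
  simp [pureMat, Matrix.conjTranspose_apply, star_mul, mul_comm]

lemma pureMat_psd {n : ℕ} (v : Fin n → ℂ) : (pureMat v).PosSemidef := by
  refine Matrix.PosSemidef.of_dotProduct_mulVec_nonneg (pureMat_herm v) fun x => ?_
  have : dotProduct (star x) (pureMat v *ᵥ x)
      = star (∑ j, star (v j) * x j) * (∑ j, star (v j) * x j) := by
    simp only [dotProduct, Matrix.mulVec, pureMat, Matrix.of_apply, Pi.star_apply,
      star_sum, star_mul, star_star, Finset.mul_sum, Finset.sum_mul]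
    rw [Finset.sum_comm]
    refine Finset.sum_congr rfl fun i _ => Finset.sum_congr rfl fun j _ => by ring
  rw [this]
  exact star_mul_self_nonneg _

lemma pureMat_conj {n : ℕ} (U : Matrix (Fin n) (Fin n) ℂ) (v : Fin n → ℂ) :
    Uᴴ * pureMat v * U = pureMat (Uᴴ *ᵥ v) := by
  ext i j
  simp only [pureMat, Matrix.mul_apply, Matrix.of_apply, Matrix.mulVec, dotProduct,
    Matrix.conjTranspose_apply, star_sum, star_mul, star_star, Finset.mul_sum, Finset.sum_mul]
  refine Finset.sum_congr rfl fun k _ => Finset.sum_congr rfl fun l _ => by ring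

lemma bayesLE_refl {k : ℕ} (x : Fin k → ℝ) : bayesLE x x := by
  refine ⟨Tuple.sort (fun i => -x i), ?_, ?_, fun i j _ => le_of_eq (mul_comm _ _)⟩ <;>
  · intro i j hij
    have := Tuple.monotone_sort (fun i => -x i) hij
    simpa using this

lemma pureMat_mul_self {n : ℕ} (v : Fin n → ℂ) (hv : ∑ i, v i * star (v i) = 1) :
    pureMat v * pureMat v = pureMat v := by
  ext i j
  simp only [pureMat, Matrix.mul_apply, Matrix.of_apply]
  calc ∑ k, v i * star (v k) * (v k * star (v j))
      = (∑ k, v k * star (v k)) * (v i * star (v j)) := by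
        rw [Finset.sum_mul]; exact Finset.sum_congr rfl fun k _ => by ring
    _ = v i * star (v j) := by rw [hv, one_mul]

lemma pureMat_trace {n : ℕ} (v : Fin n → ℂ) : (pureMat v).trace = ∑ i, v i * star (v i) := rfl

lemma entropy_zero_classify {m : ℕ} (x : ClState m) (h : shannonEntropy x = 0) :
    ∃ i : Fin m, x.val = fun j => if j = i then 1 else 0 := by
  obtain ⟨hx0, hx1⟩ := x.prop
  have hle1 : ∀ i, x.val i ≤ 1 := by
    intro i
    rw [← hx1]
    exact Finset.single_le_sum (fun j _ => hx0 j) (Finset.mem_univ i)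
  have hterm : ∀ i ∈ Finset.univ, x.val i * Real.log (x.val i) ≤ 0 := fun i _ =>
    mul_nonpos_iff.mpr (Or.inl ⟨hx0 i, Real.log_nonpos (hx0 i) (hle1 i)⟩)
  have hsum0 : ∑ i, x.val i * Real.log (x.val i) = 0 := by
    have := h; unfold shannonEntropy at this; linarith
  have heach := (Finset.sum_eq_zero_iff_of_nonpos hterm).mp hsum0
  have hval : ∀ i, x.val i = 0 ∨ x.val i = 1 := by
    intro i
    rcases mul_eq_zero.mp (heach i (Finset.mem_univ i)) with h0 | hl
    · exact Or.inl h0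
    · rcases Real.log_eq_zero.mp hl with h0 | h1 | hneg
      · exact Or.inl h0
      · exact Or.inr h1
      · exact absurd (hneg ▸ hx0 i) (by norm_num)
  have hex : ∃ i, x.val i = 1 := by
    by_contra hc
    push_neg at hc
    have : ∀ i ∈ Finset.univ, x.val i = 0 := fun i _ => (hval i).resolve_right (hc i)
    rw [Finset.sum_eq_zero this] at hx1
    norm_num at hx1
  obtain ⟨i, hi⟩ := hex
  refine ⟨i, funext fun j => ?_⟩
  by_cases hji : j = i
  · simp [hji, hi]
  · simp only [hji, if_false]
    rcases hval j with h0 | h1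
    · exact h0
    · exfalso
      have hpair : x.val i + x.val j ≤ ∑ k, x.val k := by
        have : ({i, j} : Finset (Fin m)) ⊆ Finset.univ := Finset.subset_univ _
        calc x.val i + x.val j = ∑ k ∈ ({i, j} : Finset (Fin m)), x.val k :=
              (Finset.sum_pair (fun hij : i = j => hji hij.symm)).symm
          _ ≤ _ := Finset.sum_le_sum_of_subset_of_nonneg this (fun k _ _ => hx0 k)
      rw [hx1, hi, h1] at hpair
      linarith

lemma vn_zero {n : ℕ} (ρ : QState n) (hid : ρ.val * ρ.val = ρ.val) : vnEntropy ρ = 0 := by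
  have hev : ∀ i, ρ.prop.1.1.eigenvalues i = 0 ∨ ρ.prop.1.1.eigenvalues i = 1 := by
    intro i
    have hb := ρ.prop.1.1.mulVec_eigenvectorBasis i
    have h2 : ρ.val *ᵥ (ρ.val *ᵥ ⇑(ρ.prop.1.1.eigenvectorBasis i))
        = ρ.val *ᵥ ⇑(ρ.prop.1.1.eigenvectorBasis i) := by
      rw [Matrix.mulVec_mulVec, hid]
    rw [hb, Matrix.mulVec_smul, hb, smul_smul] at h2
    have hbne : (⇑(ρ.prop.1.1.eigenvectorBasis i) : Fin n → ℂ) ≠ 0 := by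
      intro hz
      have := ρ.prop.1.1.eigenvectorBasis.orthonormal.ne_zero i
      apply this
      ext j
      exact congrFun hz j
    have hz : (ρ.prop.1.1.eigenvalues i * ρ.prop.1.1.eigenvalues i
        - ρ.prop.1.1.eigenvalues i) • (⇑(ρ.prop.1.1.eigenvectorBasis i) : Fin n → ℂ) = 0 := by
      rw [sub_smul, h2, sub_self]
    rcases smul_eq_zero.mp hz with hl | hr
    · have : ρ.prop.1.1.eigenvalues i * (ρ.prop.1.1.eigenvalues i - 1) = 0 := by ring_nf; linarith
      rcases mul_eq_zero.mp this with h | h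
      · exact Or.inl h
      · exact Or.inr (by linarith)
    · exact absurd hr hbne
  unfold vnEntropy
  rw [neg_eq_zero]
  refine Finset.sum_eq_zero fun i _ => ?_
  rcases hev i with h | h <;> simp [h]

lemma spec_pure_eq {n : ℕ} (hn : 2 ≤ n) (v v' : Fin n → ℂ)
    (hv : ∑ i, v i * star (v i) = 1) (hv' : ∑ i, v' i * star (v' i) = 1)
    (h : specLE (pureMat v) (pureMat v')) : pureMat v = pureMat v' := by
  haveI : NeZero n := ⟨by omega⟩
  obtain ⟨U, hU, hd1, hd2, hbayes⟩ := h
  have hUU' : U * Uᴴ = 1 := by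
    have := Matrix.mem_unitaryGroup_iff.mp hU
    rwa [Matrix.star_eq_conjTranspose] at this
  set w : Fin n → ℂ := Uᴴ *ᵥ v with hw
  set w' : Fin n → ℂ := Uᴴ *ᵥ v' with hw'
  simp only [pureMat_conj] at hd1 hd2 hbayes
  -- traces
  have htr : ∀ u : Fin n → ℂ, (∑ i, u i * star (u i) = 1) →
      ∑ i, (Uᴴ *ᵥ u) i * star ((Uᴴ *ᵥ u) i) = 1 := by
    intro u hu
    have : (pureMat (Uᴴ *ᵥ u)).trace = (pureMat u).trace := by
      rw [← pureMat_conj, Matrix.trace_mul_comm, ← Matrix.mul_assoc, hUU', Matrix.one_mul]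
    rw [pureMat_trace, pureMat_trace] at this
    rw [this, hu]
  have htrw : ∑ i, w i * star (w i) = 1 := htr v hv
  have htrw' : ∑ i, w' i * star (w' i) = 1 := htr v' hv'
  -- support
  have hsupp : ∀ u : Fin n → ℂ, (pureMat u).IsDiag → (∑ i, u i * star (u i) = 1) →
      ∃ k, u k * star (u k) = 1 ∧ ∀ j, j ≠ k → u j = 0 := by
    intro u hd hu
    have hex : ∃ k, u k ≠ 0 := by
      by_contra hc
      push_neg at hc
      rw [Finset.sum_eq_zero (fun i _ => by rw [hc i, zero_mul])] at hu
      norm_num at hu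
    obtain ⟨k, hk⟩ := hex
    have hzero : ∀ j, j ≠ k → u j = 0 := by
      intro j hj
      have := hd (Ne.symm hj)
      simp only [pureMat, Matrix.of_apply] at this
      rcases mul_eq_zero.mp this with h | h
      · exact absurd h hk
      · exact star_eq_zero.mp h
    refine ⟨k, ?_, hzero⟩
    rw [← hu, Finset.sum_eq_single k (fun j _ hj => by rw [hzero j hj, zero_mul]) (by simp)]
  obtain ⟨k, hk1, hk0⟩ := hsupp w hd1 htrw
  obtain ⟨l, hl1, hl0⟩ := hsupp w' hd2 htrw'
  -- bayes forces k = l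
  obtain ⟨σ, ha, hb, _⟩ := hbayes
  have hdk : ∀ (u : Fin n → ℂ) (k : Fin n), (u k * star (u k) = 1) → (∀ j, j ≠ k → u j = 0) →
      (Antitone fun i => ((pureMat u) (σ i) (σ i)).re) → σ 0 = k := by
    intro u k hk1 hk0 hanti
    by_contra hne
    have h1 : ((pureMat u) k k).re = 1 := by
      show (u k * star (u k)).re = 1
      rw [hk1]; simp
    have h2 : ((pureMat u) (σ 0) (σ 0)).re = 0 := by
      show (u (σ 0) * star (u (σ 0))).re = 0
      rw [hk0 (σ 0) hne, zero_mul]; simp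
    have hmono := hanti (Fin.zero_le (σ.symm k))
    simp only [Equiv.apply_symm_apply] at hmono
    rw [h1, h2] at hmono
    linarith
  have hks : σ 0 = k := hdk w k hk1 hk0 ha
  have hls : σ 0 = l := hdk w' l hl1 hl0 hb
  -- reconstruct
  have hrec : ∀ (u : Fin n → ℂ) (k : Fin n), (u k * star (u k) = 1) → (∀ j, j ≠ k → u j = 0) →
      pureMat (U *ᵥ u) = Matrix.of fun i j => U i k * star (U j k) := by
    intro u k hk1 hk0
    have hui : ∀ i, (U *ᵥ u) i = U i k * u k := by
      intro i
      simp only [Matrix.mulVec, dotProduct]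
      exact Finset.sum_eq_single k (fun j _ hj => by rw [hk0 j hj, mul_zero]) (by simp)
    ext i j
    simp only [pureMat, Matrix.of_apply, hui, star_mul]
    calc U i k * u k * (star (u k) * star (U j k))
        = (u k * star (u k)) * (U i k * star (U j k)) := by ring
      _ = U i k * star (U j k) := by rw [hk1, one_mul]
  have hvw : v = U *ᵥ w := by
    rw [hw, Matrix.mulVec_mulVec, hUU', Matrix.one_mulVec]
  have hvw' : v' = U *ᵥ w' := by
    rw [hw', Matrix.mulVec_mulVec, hUU', Matrix.one_mulVec]
  rw [hvw, hvw', hrec w k hk1 hk0, hrec w' l hl1 hl0, ← hks, ← hls]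

noncomputable def pv (n : ℕ) (t : ℝ) : Fin n → ℂ := fun i =>
  if (i : ℕ) = 0 then (Real.sqrt t : ℂ) else if (i : ℕ) = 1 then (Real.sqrt (1 - t) : ℂ) else 0

lemma star_sqrt_mul {s : ℝ} (hs : 0 ≤ s) :
    ((Real.sqrt s : ℂ)) * star ((Real.sqrt s : ℂ)) = (s : ℂ) := by
  rw [Complex.star_def, Complex.conj_ofReal, ← Complex.ofReal_mul, Real.mul_self_sqrt hs]

lemma pv_sum {n : ℕ} (hn : 2 ≤ n) {t : ℝ} (h0 : 0 ≤ t) (h1 : t ≤ 1) :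
    ∑ i, pv n t i * star (pv n t i) = 1 := by
  set i0 : Fin n := ⟨0, by omega⟩ with hi0def
  set i1 : Fin n := ⟨1, by omega⟩ with hi1def
  have hfun : ∀ i : Fin n, pv n t i * star (pv n t i)
      = (if i = i0 then (t : ℂ) else 0) + (if i = i1 then ((1 - t : ℝ) : ℂ) else 0) := by
    intro i
    by_cases h0i : (i : ℕ) = 0
    · have hii0 : i = i0 := by simp [hi0def, Fin.ext_iff, h0i]
      have hii1 : i ≠ i1 := by simp [hi1def, Fin.ext_iff, h0i]
      simp only [pv, h0i, if_true, hii0, if_pos rfl, if_neg (hii0 ▸ hii1)]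
      rw [if_pos (show (i0 : ℕ) = 0 from rfl), star_sqrt_mul h0, add_zero]
    · by_cases h1i : (i : ℕ) = 1
      · have hii1 : i = i1 := by simp [hi1def, Fin.ext_iff, h1i]
        have hii0 : i ≠ i0 := by simp [hi0def, Fin.ext_iff, h1i]
        simp only [pv, h0i, h1i]
        norm_num [hii0, hii1]
        rw [← Complex.ofReal_mul, Real.mul_self_sqrt (by linarith)]
        push_cast
        rw [if_neg (show i1 ≠ i0 by simp [hi0def, hi1def, Fin.ext_iff])]
        ring
      · have hii0 : i ≠ i0 := by simp [hi0def, Fin.ext_iff, h0i]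
        have hii1 : i ≠ i1 := by simp [hi1def, Fin.ext_iff, h1i]
        simp [pv, h0i, h1i, hii0, hii1]
  rw [Finset.sum_congr rfl fun i _ => hfun i, Finset.sum_add_distrib,
    Finset.sum_ite_eq' Finset.univ i0 (fun _ => (t : ℂ)),
    Finset.sum_ite_eq' Finset.univ i1 (fun _ => ((1 - t : ℝ) : ℂ))]
  simp only [Finset.mem_univ, if_true]
  push_cast
  ring

/-- There is no order embedding of (Ωⁿ, ⊑) into (Δᵐ, ⊑) preserving entropy. -/
theorem quantum_does_not_embed_in_classical (n m : ℕ) (hn : 2 ≤ n) (hm : 2 ≤ m) :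
    ¬ ∃ φ : QState n → ClState m,
        (∀ ρ τ : QState n, qLE ρ τ ↔ clLE (φ ρ) (φ τ)) ∧
        (∀ ρ : QState n, shannonEntropy (φ ρ) = vnEntropy ρ) := by
  rintro ⟨φ, hord, hent⟩
  haveI : NeZero n := ⟨by omega⟩
  have hm0 : (0 : ℝ) < m := by exact_mod_cast (by omega : 0 < m)
  set t : Fin (m + 1) → ℝ := fun a => (a : ℝ) / m with htdef
  have ht0 : ∀ a, 0 ≤ t a := fun a => div_nonneg (Nat.cast_nonneg _) (le_of_lt hm0)
  have ht1 : ∀ a, t a ≤ 1 := by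
    intro a
    rw [htdef]
    rw [div_le_one hm0]
    have : (a : ℕ) ≤ m := by omega
    exact_mod_cast this
  have hsum : ∀ a, ∑ i, pv n (t a) i * star (pv n (t a) i) = 1 :=
    fun a => pv_sum hn (ht0 a) (ht1 a)
  set ρ : Fin (m + 1) → QState n :=
    fun a => ⟨pureMat (pv n (t a)), pureMat_psd _, by rw [pureMat_trace]; exact hsum a⟩ with hρdef
  have hvn : ∀ a, vnEntropy (ρ a) = 0 := fun a => vn_zero _ (pureMat_mul_self _ (hsum a))
  have hsh : ∀ a, shannonEntropy (φ (ρ a)) = 0 := fun a => (hent (ρ a)).trans (hvn a)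
  choose g hg using fun a => entropy_zero_classify (φ (ρ a)) (hsh a)
  have hginj : Function.Injective g := by
    intro a b hab
    have hφ : φ (ρ a) = φ (ρ b) := Subtype.ext (by rw [hg a, hg b, hab])
    have hcl : clLE (φ (ρ a)) (φ (ρ b)) := by
      rw [hφ]
      exact bayesLE_refl _
    have hq : qLE (ρ a) (ρ b) := (hord _ _).mpr hcl
    have heq : pureMat (pv n (t a)) = pureMat (pv n (t b)) :=
      spec_pure_eq hn _ _ (hsum a) (hsum b) hq
    set i0 : Fin n := ⟨0, by omega⟩ with hi0def
    have hval : ∀ s : ℝ, 0 ≤ s → pureMat (pv n s) i0 i0 = (s : ℂ) := by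
      intro s hs
      show pv n s i0 * star (pv n s i0) = (s : ℂ)
      have : (i0 : ℕ) = 0 := rfl
      simp only [pv, this, if_true, if_pos rfl]
      exact star_sqrt_mul hs
    have h00 := congrArg (fun M : Matrix (Fin n) (Fin n) ℂ => M i0 i0) heq
    simp only [hval (t a) (ht0 a), hval (t b) (ht0 b)] at h00
    have htt : t a = t b := by exact_mod_cast h00
    have : (a : ℝ) = (b : ℝ) := by
      rw [htdef] at htt
      field_simp at htt
      exact_mod_cast htt
    have : (a : ℕ) = (b : ℕ) := by exact_mod_cast this
    exact Fin.ext this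
  have hcard := Fintype.card_le_of_injective g hginj
  simp only [Fintype.card_fin] at hcard
  omega
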